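/- Let f(y) = (1 − √(1−y))/2 and g = f². Then for every integer n ≥ 0 and every y ∈ [−3, 1), |g^{(n)}(y)| ≤ |f^{(n)}(y)|. -/

import Mathlib

open Real Set

private lemma idw_open {s : Set ℝ} {x : ℝ} (n : ℕ) (hs : IsOpen s) (hx : x ∈ s)
    (f : ℝ → ℝ) : iteratedDerivWithin n f s x = iteratedDeriv n f x := by
  simp only [iteratedDerivWithin, iteratedDeriv,
    iteratedFDerivWithin_of_isOpen (f := f) n hs hx]

private lemma sq_eq_on : Set.EqOn (fun t : ℝ => ((1 - Real.sqrt (1 - t)) / 2) ^ 2)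
    (fun t : ℝ => (1 - Real.sqrt (1 - t)) / 2 - t / 4) (Set.Iio 1) := by
  intro t ht
  have h1 : (0:ℝ) ≤ 1 - t := by simp only [Set.mem_Iio] at ht; linarith
  have := Real.sq_sqrt h1
  simp only
  nlinarith [this]

private lemma contDiffOn_f (n : ℕ) :
    ContDiffOn ℝ n (fun t : ℝ => (1 - Real.sqrt (1 - t)) / 2) (Set.Iio 1) := by
  intro x hx
  have hne : (1 : ℝ) - x ≠ 0 := by simp only [Set.mem_Iio] at hx; intro h; linarith
  apply ContDiffAt.contDiffWithinAt
  exact ((contDiffAt_const.sub ((Real.contDiffAt_sqrt hne).comp x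
    ((contDiff_const.sub contDiff_id).contDiffAt))).div_const 2)

theorem stmt7 (n : ℕ) (y : ℝ) (hy : y ∈ Set.Ico (-3 : ℝ) 1) :
    |iteratedDeriv n (fun t : ℝ => ((1 - Real.sqrt (1 - t)) / 2) ^ 2) y|
      ≤ |iteratedDeriv n (fun t : ℝ => (1 - Real.sqrt (1 - t)) / 2) y| := by
  obtain ⟨hy1, hy2⟩ := hy
  have hyI : y ∈ Set.Iio (1:ℝ) := hy2
  have hopen : IsOpen (Set.Iio (1:ℝ)) := isOpen_Iio
  have hud : UniqueDiffOn ℝ (Set.Iio (1:ℝ)) := hopen.uniqueDiffOn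
  have h1y : (0:ℝ) < 1 - y := by linarith
  have hs0 : 0 < Real.sqrt (1 - y) := Real.sqrt_pos.mpr h1y
  have hs2 : Real.sqrt (1 - y) ≤ 2 := by
    rw [show (2:ℝ) = Real.sqrt 4 by rw [show (4:ℝ) = 2^2 by norm_num, Real.sqrt_sq] ; norm_num]
    exact Real.sqrt_le_sqrt (by linarith)
  -- rewrite the squared function
  have key : iteratedDeriv n (fun t : ℝ => ((1 - Real.sqrt (1 - t)) / 2) ^ 2) y
      = iteratedDeriv n (fun t : ℝ => (1 - Real.sqrt (1 - t)) / 2) y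
        - iteratedDeriv n (fun t : ℝ => t / 4) y := by
    have e1 := sq_eq_on.iteratedDeriv_of_isOpen hopen n hyI
    rw [e1]
    have : (fun t : ℝ => (1 - Real.sqrt (1 - t)) / 2 - t / 4)
        = (fun t : ℝ => (1 - Real.sqrt (1 - t)) / 2) - (fun t : ℝ => t / 4) := rfl
    rw [this, ← idw_open n hopen hyI, ← idw_open n hopen hyI, ← idw_open n hopen hyI]
    exact iteratedDerivWithin_sub hyI hud (contDiffOn_f n y hyI)
      ((contDiff_id.div_const (4:ℝ)).contDiffOn y hyI)
  rw [key]
  match n with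
  | 0 =>
    simp only [iteratedDeriv_zero]
    have hf : |(1 - Real.sqrt (1 - y)) / 2| ≤ 1 := by
      rw [abs_le]; constructor <;> [linarith; linarith]
    have hval : (1 - Real.sqrt (1 - y)) / 2 - y / 4 = ((1 - Real.sqrt (1 - y)) / 2) ^ 2 := by
      nlinarith [Real.sq_sqrt h1y.le]
    rw [hval, abs_pow]
    nlinarith [abs_nonneg ((1 - Real.sqrt (1 - y)) / 2)]
  | 1 =>
    simp only [iteratedDeriv_one]
    have hd : deriv (fun t : ℝ => t / 4) y = 1 / 4 := by
      simp [deriv_div_const]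
    have hdf : deriv (fun t : ℝ => (1 - Real.sqrt (1 - t)) / 2) y
        = 1 / (4 * Real.sqrt (1 - y)) := by
      have h1 : HasDerivAt (fun t : ℝ => 1 - t) (-1) y := by
        simpa using (hasDerivAt_id y).const_sub 1
      have h2 : HasDerivAt (fun t : ℝ => Real.sqrt (1 - t))
          ((1 / (2 * Real.sqrt (1 - y))) * (-1)) y :=
        (Real.hasDerivAt_sqrt h1y.ne').comp y h1
      have h3 : HasDerivAt (fun t : ℝ => (1 - Real.sqrt (1 - t)) / 2)
          ((0 - (1 / (2 * Real.sqrt (1 - y))) * (-1)) / 2) y :=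
        ((hasDerivAt_const y (1:ℝ)).sub h2).div_const 2
      rw [h3.deriv]
      field_simp
      ring
    rw [hd, hdf]
    have h8 : 1 / (4 * Real.sqrt (1 - y)) ≥ 1 / 8 := by
      apply one_div_le_one_div_of_le <;> nlinarith
    have hpos : 0 < 1 / (4 * Real.sqrt (1 - y)) := by positivity
    rw [abs_of_pos hpos, abs_le]
    constructor <;> linarith
  | (m + 2) =>
    have hc : ∀ k : ℕ, iteratedDeriv (k + 1) (fun _ : ℝ => (1:ℝ)/4) = fun _ => 0 := by
      intro k
      induction k with
      | zero => funext x; simp [iteratedDeriv_one]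
      | succ k ih => funext x; rw [iteratedDeriv_succ, ih]; simp
    have hz : iteratedDeriv (m + 2) (fun t : ℝ => t / 4) y = 0 := by
      rw [show m + 2 = m + 1 + 1 from rfl, iteratedDeriv_succ']
      have h4 : deriv (fun t : ℝ => t / 4) = fun _ : ℝ => (1:ℝ)/4 := by
        funext t; simp [deriv_div_const]
      rw [h4, hc m]
    rw [hz, sub_zero]
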